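/- arXiv:1911.12896 — 3 statements merged into one kernel-verified Lean document; each statement's English description precedes it below -/
import Mathlib

section
/- Let E be a real normed vector space, let Δ > 0, C > 0, T ∈ ℕ, let w : ℕ → E be a sequence of models, and let f : ℕ → ℝ be a sequence of nonnegative losses such that the drift bound ‖w(t+1) − w(t)‖ ≤ C·f(t) holds for every t < T. Suppose t₀ < t₁ < ⋯ < t_m are natural numbers with t_m ≤ T such that ‖w(t_i) − w(t_{i−1})‖ > √Δ for every i ∈ {1,…,m}. Then m ≤ (C/√Δ)·∑_{t = t₀}^{T−1} f(t), i.e., the number of violations of a single learner is bounded by C/√Δ times its cumulative loss. -/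
/-- If each drift of a single learner's model is bounded by `C` times its loss,
then the number of its violation times is bounded by `C/√Δ` times its
cumulative loss: `m ≤ (C/√Δ) · ∑_{s = t 0}^{T-1} f s`. -/
theorem num_violations_le_cumulative_loss
    {E : Type*} [NormedAddCommGroup E] [NormedSpace ℝ E]
    (Δ C : ℝ) (hΔ : 0 < Δ) (hC : 0 < C) (T m : ℕ)
    (w : ℕ → E) (f : ℕ → ℝ) (hf : ∀ s, 0 ≤ f s)
    (hdrift : ∀ s < T, ‖w (s + 1) - w s‖ ≤ C * f s)
    (t : Fin (m + 1) → ℕ) (ht : StrictMono t) (htT : t (Fin.last m) ≤ T)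
    (hviol : ∀ i : Fin m, Real.sqrt Δ < ‖w (t i.succ) - w (t i.castSucc)‖) :
    (m : ℝ) ≤ (C / Real.sqrt Δ) * ∑ s ∈ Finset.Ico (t 0) T, f s := by
  have hsΔ : 0 < Real.sqrt Δ := Real.sqrt_pos.mpr hΔ
  -- helper: norm of difference bounded by C times sum of losses
  have key : ∀ a b : ℕ, a ≤ b → b ≤ T →
      ‖w b - w a‖ ≤ C * ∑ s ∈ Finset.Ico a b, f s := by
    intro a b hab hbT
    induction b, hab using Nat.le_induction with
    | base => simp
    | succ b hab ih =>
      have hbT' : b ≤ T := by omega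
      calc ‖w (b + 1) - w a‖ ≤ ‖w (b + 1) - w b‖ + ‖w b - w a‖ := by
            have := norm_add_le (w (b + 1) - w b) (w b - w a)
            simpa using this
        _ ≤ C * f b + C * ∑ s ∈ Finset.Ico a b, f s := by
            gcongr
            · exact hdrift b (by omega)
            · exact ih hbT'
        _ = C * ∑ s ∈ Finset.Ico a (b + 1), f s := by
            rw [Finset.sum_Ico_succ_top hab]; ring
  -- define u : ℕ → ℕ
  set u : ℕ → ℕ := fun n => t ⟨min n m, by omega⟩ with hu
  have humono : Monotone u := by
    intro i j hij
    exact (ht.monotone) (by simp [Fin.le_def]; omega)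
  have huT : ∀ n, u n ≤ T := by
    intro n
    exact le_trans (ht.monotone (Fin.le_last _)) htT
  -- each interval sum is > √Δ / C
  have hstep : ∀ i < m, Real.sqrt Δ ≤ C * ∑ s ∈ Finset.Ico (u i) (u (i+1)), f s := by
    intro i hi
    have hv := hviol ⟨i, hi⟩
    have he1 : u i = t (⟨i, hi⟩ : Fin m).castSucc := by
      apply congrArg t; ext; simp; omega
    have he2 : u (i+1) = t (⟨i, hi⟩ : Fin m).succ := by
      apply congrArg t; ext; simp; omega
    have hle : u i ≤ u (i+1) := humono (by omega)
    calc Real.sqrt Δ ≤ ‖w (t (⟨i, hi⟩ : Fin m).succ) - w (t (⟨i, hi⟩ : Fin m).castSucc)‖ := hv.le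
      _ ≤ C * ∑ s ∈ Finset.Ico (u i) (u (i+1)), f s := by
          rw [← he1, ← he2]
          exact key _ _ (by rw [he1, he2]; exact (ht (by simp [Fin.lt_def])).le) (huT _)
  -- sum over consecutive intervals
  have hconsec : ∀ k ≤ m, ∑ i ∈ Finset.range k, (∑ s ∈ Finset.Ico (u i) (u (i+1)), f s)
      = ∑ s ∈ Finset.Ico (u 0) (u k), f s := by
    intro k hk
    induction k with
    | zero => simp
    | succ k ih =>
      rw [Finset.sum_range_succ, ih (by omega),
        Finset.sum_Ico_consecutive _ (humono (Nat.zero_le k)) (humono (by omega))]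
  have hmain : (m : ℝ) * Real.sqrt Δ ≤ C * ∑ s ∈ Finset.Ico (u 0) (u m), f s := by
    calc (m : ℝ) * Real.sqrt Δ = ∑ _i ∈ Finset.range m, Real.sqrt Δ := by
          simp [mul_comm]
      _ ≤ ∑ i ∈ Finset.range m, C * ∑ s ∈ Finset.Ico (u i) (u (i+1)), f s := by
          apply Finset.sum_le_sum
          intro i hi
          exact hstep i (Finset.mem_range.mp hi)
      _ = C * ∑ s ∈ Finset.Ico (u 0) (u m), f s := by
          rw [← Finset.mul_sum, hconsec m le_rfl]
  have hsub : ∑ s ∈ Finset.Ico (u 0) (u m), f s ≤ ∑ s ∈ Finset.Ico (t 0) T, f s := by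
    apply Finset.sum_le_sum_of_subset_of_nonneg
    · apply Finset.Ico_subset_Ico
      · simp [hu]
      · exact huT m
    · intro s _ _; exact hf s
  have : (m : ℝ) * Real.sqrt Δ ≤ C * ∑ s ∈ Finset.Ico (t 0) T, f s := by
    refine hmain.trans ?_
    gcongr
  rw [div_mul_eq_mul_div, le_div_iff₀ hsΔ]
  linarith
end

section
/- Let E be a real normed vector space, let Δ > 0, C > 0, T ∈ ℕ, let k ≥ 1 be the number of local learners, and for each learner l ∈ {1,…,k} let w_l : ℕ → E be its model sequence and f_l : ℕ → ℝ a nonnegative loss sequence with ‖w_l(t+1) − w_l(t)‖ ≤ C·f_l(t) for all t < T. For each learner l, let t^l_0 < t^l_1 < ⋯ < t^l_{m_l} ≤ T be its violation times, satisfying ‖w_l(t^l_i) − w_l(t^l_{i−1})‖ > √Δ for every i ∈ {1,…,m_l}. Then the number of time points t ∈ {1,…,T} at which at least one learner has a violation is at most (C/√Δ)·∑_{l=1}^k ∑_{t=0}^{T−1} f_l(t), i.e., it is bounded by C/√Δ times the cumulative loss of the distributed system. -/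
/-- The number of time points in `{1,…,T}` at which at least one of the `k`
learners has a violation is bounded by `C/√Δ` times the cumulative loss of the
distributed system, `∑_{l=1}^k ∑_{s=0}^{T-1} f l s`. -/
theorem num_global_violations_le_cumulative_loss
    {E : Type*} [NormedAddCommGroup E] [NormedSpace ℝ E]
    (Δ C : ℝ) (hΔ : 0 < Δ) (hC : 0 < C) (T k : ℕ) (hk : 1 ≤ k)
    (w : Fin k → ℕ → E) (f : Fin k → ℕ → ℝ)
    (hf : ∀ l s, 0 ≤ f l s)
    (hdrift : ∀ l, ∀ s < T, ‖w l (s + 1) - w l s‖ ≤ C * f l s)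
    (m : Fin k → ℕ) (t : (l : Fin k) → Fin (m l + 1) → ℕ)
    (ht : ∀ l, StrictMono (t l)) (htT : ∀ l, t l (Fin.last (m l)) ≤ T)
    (hviol : ∀ l, ∀ i : Fin (m l),
      Real.sqrt Δ < ‖w l (t l i.succ) - w l (t l i.castSucc)‖) :
    (((Finset.Icc 1 T).filter
        (fun s => ∃ l, ∃ i : Fin (m l), t l i.succ = s)).card : ℝ)
      ≤ (C / Real.sqrt Δ) * ∑ l, ∑ s ∈ Finset.range T, f l s := by
  have hΔ' : 0 < Real.sqrt Δ := Real.sqrt_pos.2 hΔ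
  -- per-learner bound
  have key : ∀ l : Fin k, (m l : ℝ) * Real.sqrt Δ ≤ C * ∑ s ∈ Finset.range T, f l s := by
    intro l
    set G : ℕ → ℝ := fun n => ∑ s ∈ Finset.range n, C * f l s with hG
    have hGmono : Monotone G := by
      intro a b hab
      exact Finset.sum_le_sum_of_subset_of_nonneg (Finset.range_subset_range.2 hab)
        (fun s _ _ => mul_nonneg hC.le (hf l s))
    have hseg : ∀ a b : ℕ, a ≤ b → b ≤ T → ‖w l b - w l a‖ ≤ G b - G a := by
      intro a b hab hbT
      have htel : ∑ s ∈ Finset.Ico a b, (w l (s + 1) - w l s) = w l b - w l a := by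
        rw [Finset.sum_Ico_eq_sub _ hab, Finset.sum_range_sub, Finset.sum_range_sub]
        abel
      calc ‖w l b - w l a‖ = ‖∑ s ∈ Finset.Ico a b, (w l (s + 1) - w l s)‖ := by rw [htel]
        _ ≤ ∑ s ∈ Finset.Ico a b, ‖w l (s + 1) - w l s‖ := norm_sum_le _ _
        _ ≤ ∑ s ∈ Finset.Ico a b, C * f l s := by
            refine Finset.sum_le_sum fun s hs => hdrift l s ?_
            exact lt_of_lt_of_le (Finset.mem_Ico.1 hs).2 hbT
        _ = G b - G a := Finset.sum_Ico_eq_sub _ hab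
    -- extend index function
    set v : ℕ → ℝ := fun j => G (t l ⟨min j (m l), Nat.lt_succ_of_le (min_le_right _ _)⟩) with hv
    have hstep : ∀ i : Fin (m l),
        Real.sqrt Δ ≤ v (↑i + 1) - v ↑i := by
      intro i
      have h1 : (⟨min (↑i + 1) (m l), Nat.lt_succ_of_le (min_le_right _ _)⟩ :
          Fin (m l + 1)) = i.succ := by
        apply Fin.ext; simp [Nat.min_eq_left i.2]
      have h2 : (⟨min (↑i : ℕ) (m l), Nat.lt_succ_of_le (min_le_right _ _)⟩ :
          Fin (m l + 1)) = i.castSucc := by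
        apply Fin.ext; simp [Nat.min_eq_left (le_of_lt i.2)]
      have hle : t l i.castSucc ≤ t l i.succ := ((ht l).le_iff_le).2 (by
        simp [Fin.le_def])
      have hsT : t l i.succ ≤ T :=
        le_trans (((ht l).le_iff_le).2 (Fin.le_last _)) (htT l)
      have := hseg (t l i.castSucc) (t l i.succ) hle hsT
      have := lt_of_lt_of_le (hviol l i) this
      simp only [hv, h1, h2]
      linarith
    have hsum : (m l : ℝ) * Real.sqrt Δ ≤ v (m l) - v 0 := by
      have := Finset.sum_range_sub v (m l)
      calc (m l : ℝ) * Real.sqrt Δ = ∑ _i : Fin (m l), Real.sqrt Δ := by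
            simp [mul_comm]
        _ ≤ ∑ i : Fin (m l), (v (↑i + 1) - v ↑i) := Finset.sum_le_sum fun i _ => hstep i
        _ = ∑ j ∈ Finset.range (m l), (v (j + 1) - v j) :=
            Fin.sum_univ_eq_sum_range (fun j => v (j + 1) - v j) (m l)
        _ = v (m l) - v 0 := Finset.sum_range_sub v (m l)
    have hvm : v (m l) ≤ C * ∑ s ∈ Finset.range T, f l s := by
      have : v (m l) = G (t l (Fin.last (m l))) := by
        simp [hv, Fin.last]
      rw [this]
      calc G (t l (Fin.last (m l))) ≤ G T := hGmono (htT l)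
        _ = C * ∑ s ∈ Finset.range T, f l s := by
            simp [hG, Finset.mul_sum]
    have hv0 : 0 ≤ v 0 := Finset.sum_nonneg fun s _ => mul_nonneg hC.le (hf l s)
    linarith
  -- cardinality bound
  have hcard : (((Finset.Icc 1 T).filter
      (fun s => ∃ l, ∃ i : Fin (m l), t l i.succ = s)).card : ℝ) ≤ ∑ l : Fin k, (m l : ℝ) := by
    have hsub : ((Finset.Icc 1 T).filter
        (fun s => ∃ l, ∃ i : Fin (m l), t l i.succ = s)) ⊆
        Finset.univ.biUnion (fun l : Fin k =>
          Finset.univ.image (fun i : Fin (m l) => t l i.succ)) := by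
      intro s hs
      simp only [Finset.mem_filter] at hs
      obtain ⟨-, l, i, hi⟩ := hs
      simp only [Finset.mem_biUnion, Finset.mem_image, Finset.mem_univ, true_and]
      exact ⟨l, i, hi⟩
    calc (((Finset.Icc 1 T).filter _).card : ℝ)
        ≤ ((Finset.univ.biUnion (fun l : Fin k =>
            Finset.univ.image (fun i : Fin (m l) => t l i.succ))).card : ℝ) := by
          exact_mod_cast Finset.card_le_card hsub
      _ ≤ ((∑ l : Fin k, (Finset.univ.image
            (fun i : Fin (m l) => t l i.succ)).card : ℕ) : ℝ) := by
          exact_mod_cast Finset.card_biUnion_le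
      _ ≤ ∑ l : Fin k, (m l : ℝ) := by
          push_cast
          refine Finset.sum_le_sum fun l _ => ?_
          exact_mod_cast (Finset.card_image_le).trans (by simp)
  calc (((Finset.Icc 1 T).filter
      (fun s => ∃ l, ∃ i : Fin (m l), t l i.succ = s)).card : ℝ)
      ≤ ∑ l : Fin k, (m l : ℝ) := hcard
    _ ≤ ∑ l : Fin k, (C / Real.sqrt Δ) * ∑ s ∈ Finset.range T, f l s := by
        refine Finset.sum_le_sum fun l _ => ?_
        rw [div_mul_eq_mul_div, le_div_iff₀ hΔ']
        exact key l
    _ = (C / Real.sqrt Δ) * ∑ l, ∑ s ∈ Finset.range T, f l s := by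
        rw [Finset.mul_sum]
end

section
/- Let E be a real normed vector space, let Δ > 0, C > 0, c ≥ 0, T ∈ ℕ, let k ≥ 1 be the number of local learners, and for each learner l ∈ {1,…,k} let w_l : ℕ → E be its model sequence and f_l : ℕ → ℝ a nonnegative loss sequence with ‖w_l(t+1) − w_l(t)‖ ≤ C·f_l(t) for all t < T. For each learner l let t^l_0 < t^l_1 < ⋯ < t^l_{m_l} ≤ T be its violation times, satisfying ‖w_l(t^l_i) − w_l(t^l_{i−1})‖ > √Δ for every i ∈ {1,…,m_l}. Let comm : ℕ → ℝ be the per-round communication cost, satisfying 0 ≤ comm(t) ≤ c for every t, and comm(t) = 0 whenever t is not a violation time of any learner. Then the total communication satisfies ∑_{t=1}^T comm(t) ≤ c·(C/√Δ)·∑_{l=1}^k ∑_{t=0}^{T−1} f_l(t). -/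
open Finset

private lemma aux_sum_Ico_le (g : ℕ → ℝ) (hg : ∀ s, 0 ≤ g s) (u : ℕ → ℕ) (hu : Monotone u)
    (m T : ℕ) (huT : u m ≤ T) :
    ∑ i ∈ Finset.range m, ∑ s ∈ Finset.Ico (u i) (u (i + 1)), g s
      ≤ ∑ s ∈ Finset.range T, g s := by
  induction m generalizing T with
  | zero => simpa using Finset.sum_nonneg fun i _ => hg i
  | succ n ih =>
    rw [Finset.sum_range_succ]
    have h1 := ih (u n) le_rfl
    have h2 : ∑ s ∈ Finset.range (u n), g s + ∑ s ∈ Finset.Ico (u n) (u (n + 1)), g s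
        = ∑ s ∈ Finset.range (u (n + 1)), g s := by
      rw [Finset.range_eq_Ico, Finset.range_eq_Ico]
      exact Finset.sum_Ico_consecutive g (Nat.zero_le _) (hu (Nat.le_succ n))
    have h3 : ∑ s ∈ Finset.range (u (n + 1)), g s ≤ ∑ s ∈ Finset.range T, g s :=
      Finset.sum_le_sum_of_subset_of_nonneg (Finset.range_subset_range.2 huT)
        (fun i _ _ => hg i)
    linarith

/-- The cumulative communication of dynamic averaging is bounded by `c · C/√Δ`
times the cumulative loss of the distributed system: communication occurs only
at time points where some learner has a violation, costs at most `c` per time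
point, and the number of such time points is bounded via the loss. -/
theorem communication_le_cumulative_loss
    {E : Type*} [NormedAddCommGroup E] [NormedSpace ℝ E]
    (Δ C c : ℝ) (hΔ : 0 < Δ) (hC : 0 < C) (hc : 0 ≤ c) (T k : ℕ) (hk : 1 ≤ k)
    (w : Fin k → ℕ → E) (f : Fin k → ℕ → ℝ)
    (hf : ∀ l s, 0 ≤ f l s)
    (hdrift : ∀ l, ∀ s < T, ‖w l (s + 1) - w l s‖ ≤ C * f l s)
    (m : Fin k → ℕ) (t : (l : Fin k) → Fin (m l + 1) → ℕ)
    (ht : ∀ l, StrictMono (t l)) (htT : ∀ l, t l (Fin.last (m l)) ≤ T)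
    (hviol : ∀ l, ∀ i : Fin (m l),
      Real.sqrt Δ < ‖w l (t l i.succ) - w l (t l i.castSucc)‖)
    (comm : ℕ → ℝ)
    (hcomm_nonneg : ∀ s, 0 ≤ comm s) (hcomm_le : ∀ s, comm s ≤ c)
    (hcomm_zero : ∀ s, (¬ ∃ l, ∃ i : Fin (m l), t l i.succ = s) → comm s = 0) :
    ∑ s ∈ Finset.Icc 1 T, comm s
      ≤ c * (C / Real.sqrt Δ) * ∑ l, ∑ s ∈ Finset.range T, f l s := by
  classical
  have hsΔ : 0 < Real.sqrt Δ := Real.sqrt_pos.2 hΔ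
  -- Per-learner bound: (m l) * √Δ ≤ C * total loss of learner l
  have key : ∀ l, (m l : ℝ) * Real.sqrt Δ ≤ C * ∑ s ∈ Finset.range T, f l s := by
    intro l
    set u : ℕ → ℕ := fun n => t l ⟨min n (m l), Nat.lt_succ_of_le (min_le_right _ _)⟩ with hu_def
    have humono : Monotone u := by
      intro a b hab
      exact ((ht l).monotone) (by simp [Fin.le_def]; omega)
    have huT : u (m l) ≤ T := by
      have : u (m l) = t l (Fin.last (m l)) := by
        simp [hu_def, Fin.last]
      rw [this]; exact htT l
    have step : ∀ i ∈ Finset.range (m l),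
        Real.sqrt Δ ≤ C * ∑ s ∈ Finset.Ico (u i) (u (i + 1)), f l s := by
      intro i hi
      have him : i < m l := Finset.mem_range.1 hi
      set i' : Fin (m l) := ⟨i, him⟩
      have hui : u i = t l i'.castSucc := by
        simp [hu_def, Fin.castSucc, Fin.castAdd, Fin.castLE, i', Nat.min_eq_left him.le]
      have hui1 : u (i + 1) = t l i'.succ := by
        simp [hu_def, Fin.succ, i', Nat.min_eq_left him]
      have hab : t l i'.castSucc ≤ t l i'.succ :=
        ((ht l).monotone) (Fin.castSucc_le_succ i')
      have hdist : ‖w l (t l i'.succ) - w l (t l i'.castSucc)‖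
          ≤ ∑ s ∈ Finset.Ico (t l i'.castSucc) (t l i'.succ), ‖w l (s + 1) - w l s‖ := by
        have := dist_le_Ico_sum_dist (w l) hab
        simpa [dist_eq_norm, norm_sub_rev] using this
      have hle : ∑ s ∈ Finset.Ico (t l i'.castSucc) (t l i'.succ), ‖w l (s + 1) - w l s‖
          ≤ ∑ s ∈ Finset.Ico (t l i'.castSucc) (t l i'.succ), C * f l s := by
        refine Finset.sum_le_sum fun s hs => ?_
        have hsT : s < T := by
          have h1 : s < t l i'.succ := (Finset.mem_Ico.1 hs).2
          have h2 : t l i'.succ ≤ t l (Fin.last (m l)) :=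
            ((ht l).monotone) (Fin.le_last _)
          exact lt_of_lt_of_le h1 (le_trans h2 (htT l))
        exact hdrift l s hsT
      have := (hviol l i').le.trans (hdist.trans hle)
      rw [hui, hui1, Finset.mul_sum]
      exact this
    have h1 : (m l : ℝ) * Real.sqrt Δ
        ≤ ∑ i ∈ Finset.range (m l), C * ∑ s ∈ Finset.Ico (u i) (u (i + 1)), f l s := by
      calc (m l : ℝ) * Real.sqrt Δ = ∑ _i ∈ Finset.range (m l), Real.sqrt Δ := by
            simp [mul_comm]
        _ ≤ _ := Finset.sum_le_sum step
    have h2 : ∑ i ∈ Finset.range (m l), C * ∑ s ∈ Finset.Ico (u i) (u (i + 1)), f l s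
        ≤ C * ∑ s ∈ Finset.range T, f l s := by
      rw [← Finset.mul_sum]
      exact mul_le_mul_of_nonneg_left
        (aux_sum_Ico_le (f l) (hf l) u humono (m l) T huT) hC.le
    linarith
  -- The set of communication times
  set V : Finset ℕ := (Finset.Icc 1 T).filter
    (fun s => ∃ l, ∃ i : Fin (m l), t l i.succ = s) with hV
  have hsum_eq : ∑ s ∈ Finset.Icc 1 T, comm s = ∑ s ∈ V, comm s := by
    refine (Finset.sum_subset (Finset.filter_subset _ _) ?_).symm
    intro s hs hns
    exact hcomm_zero s (fun hP => hns (Finset.mem_filter.2 ⟨hs, hP⟩))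
  have hsum_le : ∑ s ∈ V, comm s ≤ (V.card : ℝ) * c := by
    have := Finset.sum_le_card_nsmul V comm c (fun s _ => hcomm_le s)
    simpa [nsmul_eq_mul] using this
  have hcard : V.card ≤ ∑ l, m l := by
    have hsub : V ⊆ Finset.univ.biUnion
        (fun l => Finset.image (fun i : Fin (m l) => t l i.succ) Finset.univ) := by
      intro s hs
      obtain ⟨l, i, hi⟩ := (Finset.mem_filter.1 hs).2
      exact Finset.mem_biUnion.2 ⟨l, Finset.mem_univ _,
        Finset.mem_image.2 ⟨i, Finset.mem_univ _, hi⟩⟩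
    calc V.card ≤ _ := Finset.card_le_card hsub
      _ ≤ ∑ l, (Finset.image (fun i : Fin (m l) => t l i.succ) Finset.univ).card :=
          Finset.card_biUnion_le
      _ ≤ ∑ l, m l := Finset.sum_le_sum fun l _ => by
          simpa using Finset.card_image_le (f := fun i : Fin (m l) => t l i.succ)
            (s := Finset.univ)
  have hcardR : (V.card : ℝ) ≤ ∑ l, ((C / Real.sqrt Δ) * ∑ s ∈ Finset.range T, f l s) := by
    calc (V.card : ℝ) ≤ (∑ l, m l : ℕ) := by exact_mod_cast hcard
      _ = ∑ l, (m l : ℝ) := by push_cast; ring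
      _ ≤ _ := Finset.sum_le_sum fun l _ => by
          have := key l
          rw [div_mul_eq_mul_div, le_div_iff₀ hsΔ]
          linarith
  calc ∑ s ∈ Finset.Icc 1 T, comm s = ∑ s ∈ V, comm s := hsum_eq
    _ ≤ (V.card : ℝ) * c := hsum_le
    _ ≤ (∑ l, ((C / Real.sqrt Δ) * ∑ s ∈ Finset.range T, f l s)) * c :=
        mul_le_mul_of_nonneg_right hcardR hc
    _ = c * (C / Real.sqrt Δ) * ∑ l, ∑ s ∈ Finset.range T, f l s := by
        rw [← Finset.mul_sum]; ring
end
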